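/- Let Z, φ, I, I₀ be as in the context. Then φ is real analytic on I, φ(1) = 0, and φ(r) > 0 for all r ∈ I₀. Moreover φ satisfies the first-order equation (m+1)·r·Z(r)·φ'(r) + (m+1 − 2·Z(r))·φ(r) = 0 for all r ∈ I, and φ'(1) = −2. -/

import Mathlib

open Polynomial Set Filter Topology

lemma my_analyticAt_rpow_const {x c : ℝ} (hx : 0 < x) :
    AnalyticAt ℝ (fun y : ℝ => y ^ c) x := by
  have h1 : AnalyticAt ℂ (fun z : ℂ => z ^ (c : ℂ)) (x : ℂ) :=
    analyticAt_id.cpow analyticAt_const (Complex.ofReal_mem_slitPlane.2 hx)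
  have h2 : AnalyticAt ℝ (fun y : ℝ => ((y : ℂ) ^ (c : ℂ))) x :=
    h1.restrictScalars.comp (Complex.ofRealCLM.analyticAt x)
  have h3 : AnalyticAt ℝ (fun y : ℝ => ((y : ℂ) ^ (c : ℂ)).re) x :=
    (Complex.reCLM.analyticAt _).comp h2
  apply h3.congr
  filter_upwards [eventually_gt_nhds hx] with y hy
  rw [← Complex.ofReal_cpow hy.le, Complex.ofReal_re]

lemma my_reverse_eval_zero (p phat : Polynomial ℝ) (n : ℕ) (hdeg : p.natDegree < n + 1)
    (hcf : p.coeff n = 1)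
    (h : ∀ x : ℝ, x ≠ 0 → phat.eval x = x ^ n * p.eval (1 / x)) :
    phat.eval 0 = 1 := by
  have key : phat = ∑ i ∈ Finset.range (n + 1), C (p.coeff (n - i)) * X ^ i := by
    apply Polynomial.eq_of_infinite_eval_eq
    apply Set.Infinite.mono (s := ({0}ᶜ : Set ℝ))
    · intro x hx
      have hx0 : x ≠ 0 := hx
      simp only [Set.mem_setOf_eq]
      rw [h x hx0, Polynomial.eval_eq_sum_range' hdeg, Finset.mul_sum,
        ← Finset.sum_range_reflect, eval_finset_sum]
      apply Finset.sum_congr rfl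
      intro i hi
      simp only [Finset.mem_range] at hi
      rw [eval_mul, eval_C, eval_pow, eval_X]
      have h1 : n + 1 - 1 - i = n - i := by omega
      rw [h1, one_div, inv_pow]
      have h2 : x ^ (n - (n - i)) = x ^ n * (x ^ (n - i))⁻¹ := pow_sub₀ x hx0 (by omega)
      have h3 : n - (n - i) = i := by omega
      rw [h3] at h2
      rw [h2]
      ring
    · exact Set.Finite.infinite_compl (Set.finite_singleton 0)
  rw [key, eval_finset_sum, Finset.sum_eq_single 0]
  · simp [hcf]
  · intro i _ hi
    simp [zero_pow hi]
  · simp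

/-- properties of φ built from the ODE solution Z. -/
theorem stmt_0 (m : ℕ) (hm : 2 ≤ m)
    (P Q Phat Qhat : Polynomial ℝ)
    (hPmon : P.Monic) (hPdeg : P.natDegree = m - 1)
    (hQ : ∀ y : ℝ, (derivative Q).eval y = ((m : ℝ) + 1) * y * P.eval y)
    (hPhat : ∀ x : ℝ, x ≠ 0 → Phat.eval x = x ^ (m - 1) * P.eval (1 / x))
    (hQhat : ∀ x : ℝ, x ≠ 0 → Qhat.eval x = x ^ (m + 1) * Q.eval (1 / x))
    (a b : ℝ) (ha : 0 ≤ a) (h1 : (1 : ℝ) ∈ Ioo a b)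
    (Z : ℝ → ℝ) (hZan : AnalyticOnNhd ℝ Z (Ioo a b))
    (hODE : ∀ r ∈ Ioo a b, r * deriv Z r * Phat.eval (Z r) + Qhat.eval (Z r) = 0)
    (hZ1 : Z 1 = 0)
    (hZ' : ∀ r ∈ Ioo a b, deriv Z r < 0)
    (hPZ : ∀ r ∈ Ioo a b, 0 < Phat.eval (Z r))
    (hZpos : ∀ r ∈ Ioo a b ∩ Ioo (0 : ℝ) 1, 0 < Z r)
    (φ : ℝ → ℝ)
    (hφ : ∀ r : ℝ, φ r =
      2 * (r / (-(deriv Z r) * Phat.eval (Z r))) ^ (1 / ((m : ℝ) + 1)) * Z r) :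
    AnalyticOnNhd ℝ φ (Ioo a b) ∧ φ 1 = 0 ∧
      (∀ r ∈ Ioo a b ∩ Ioo (0 : ℝ) 1, 0 < φ r) ∧
      (∀ r ∈ Ioo a b,
        ((m : ℝ) + 1) * r * Z r * deriv φ r + ((m : ℝ) + 1 - 2 * Z r) * φ r = 0) ∧
      deriv φ 1 = -2 := by
  obtain ⟨k, rfl⟩ : ∃ k, m = k + 2 := ⟨m - 2, by omega⟩
  have hrpos : ∀ r ∈ Ioo a b, (0:ℝ) < r := fun r hr => lt_of_le_of_lt ha hr.1
  have hQZpos : ∀ r ∈ Ioo a b, 0 < Qhat.eval (Z r) := by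
    intro r hr
    have h0 := hODE r hr
    nlinarith [mul_pos (mul_pos (hrpos r hr) (neg_pos.2 (hZ' r hr))) (hPZ r hr)]
  have hanti : StrictAntiOn Z (Ioo a b) := by
    apply strictAntiOn_of_deriv_neg (convex_Ioo a b) hZan.continuousOn
    intro x hx
    rw [interior_Ioo] at hx
    exact hZ' x hx
  have hZne : ∀ r ∈ Ioo a b, r ≠ 1 → Z r ≠ 0 := by
    intro r hr hne
    rcases lt_or_gt_of_ne hne with h | h
    · have := hanti hr h1 h
      rw [hZ1] at this
      exact ne_of_gt this
    · have := hanti h1 hr h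
      rw [hZ1] at this
      exact ne_of_lt this
  -- polynomial facts
  have hP1 : P.coeff (k+1) = 1 := by
    have := hPmon.coeff_natDegree
    rwa [hPdeg] at this
  have hQder : derivative Q = C (((k+2 : ℕ) : ℝ) + 1) * (X * P) := by
    apply Polynomial.funext
    intro y
    rw [hQ y]
    simp only [eval_mul, eval_C, eval_X]
    ring
  have hQc : Q.coeff (k+3) = 1 := by
    have h2 := Polynomial.coeff_derivative Q (k+2)
    rw [hQder, Polynomial.coeff_C_mul,
      show k+2 = (k+1)+1 from rfl, Polynomial.coeff_X_mul, hP1] at h2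
    have hM : ((k+1+1 : ℕ) : ℝ) + 1 ≠ 0 := by positivity
    have h3 : Q.coeff (k+3) * (((k+1+1 : ℕ) : ℝ) + 1) = 1 * (((k+1+1 : ℕ) : ℝ) + 1) := by
      rw [one_mul, ← h2]
      push_cast
      ring
    exact mul_right_cancel₀ hM h3
  have hQdeg : Q.natDegree < k + 3 + 1 := by
    have hle : Q.natDegree ≤ k + 3 := by
      rw [Polynomial.natDegree_le_iff_coeff_eq_zero]
      intro N hN
      obtain ⟨j, rfl⟩ : ∃ j, N = j + (k + 4) := ⟨N - (k+4), by omega⟩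
      have h2 := Polynomial.coeff_derivative Q (j + (k+3))
      rw [hQder, Polynomial.coeff_C_mul,
        show j + (k+3) = (j + (k+2)) + 1 by omega, Polynomial.coeff_X_mul] at h2
      rw [Polynomial.coeff_eq_zero_of_natDegree_lt (by rw [hPdeg]; omega)] at h2
      rw [show j + (k+2) + 1 + 1 = j + (k+4) by omega] at h2
      have hM : ((j + (k+2) + 1 : ℕ) : ℝ) + 1 ≠ 0 := by positivity
      have h3 : Q.coeff (j + (k+4)) * (((j + (k+2) + 1 : ℕ) : ℝ) + 1) = 0 := by
        linarith [h2]
      exact (mul_eq_zero.1 h3).resolve_right hM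
    omega
  have hP0 : Phat.eval 0 = 1 :=
    my_reverse_eval_zero P Phat (k+1) (by rw [hPdeg]; omega) hP1 (fun x hx => hPhat x hx)
  have hQ0 : Qhat.eval 0 = 1 :=
    my_reverse_eval_zero Q Qhat (k+3) hQdeg hQc (fun x hx => hQhat x hx)
  -- identity for derivative of Qhat
  have hqid : ∀ z : ℝ, z ≠ 0 →
      z * (derivative Qhat).eval z = (((k+2 : ℕ) : ℝ) + 1) * (Qhat.eval z - Phat.eval z) := by
    intro z hz
    have heq : (fun x : ℝ => Qhat.eval x) =ᶠ[𝓝 z] fun x => x ^ (k+3) * Q.eval x⁻¹ := by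
      filter_upwards [eventually_ne_nhds hz] with x hx
      rw [hQhat x hx, one_div]
    have hd : HasDerivAt (fun x : ℝ => x ^ (k+3) * Q.eval x⁻¹)
        ((↑(k+3) * z^(k+2)) * Q.eval z⁻¹
          + z^(k+3) * ((derivative Q).eval z⁻¹ * (-(z^2)⁻¹))) z :=
      (hasDerivAt_pow (k+3) z).mul ((Q.hasDerivAt z⁻¹).comp z (hasDerivAt_inv hz))
    have hDQ : (derivative Qhat).eval z = (↑(k+3) * z^(k+2)) * Q.eval z⁻¹
        + z^(k+3) * ((derivative Q).eval z⁻¹ * (-(z^2)⁻¹)) := by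
      rw [← Polynomial.deriv (p := Qhat) (x := z), heq.deriv_eq, hd.deriv]
    have e1 : Q.eval z⁻¹ = Qhat.eval z / z^(k+3) := by
      rw [hQhat z hz, one_div]
      field_simp
    have e2 : P.eval z⁻¹ = Phat.eval z / z^(k+1) := by
      rw [hPhat z hz, one_div]
      field_simp
      rw [show k + 2 - 1 = k + 1 by omega]
    rw [hDQ, hQ z⁻¹, e1, e2]
    field_simp
    push_cast
    ring
  -- the alternative formula
  set c : ℝ := 1 / (((k+2 : ℕ) : ℝ) + 1) with hc
  set B : ℝ → ℝ := fun x => x ^ 2 / Qhat.eval (Z x) with hB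
  set ψ : ℝ → ℝ := fun x => 2 * B x ^ c * Z x with hψ
  have hBpos : ∀ r ∈ Ioo a b, 0 < B r := by
    intro r hr
    simp only [hB]
    exact div_pos (pow_pos (hrpos r hr) 2) (hQZpos r hr)
  have hQan : ∀ r ∈ Ioo a b, AnalyticAt ℝ (fun x => Qhat.eval (Z x)) r := by
    intro r hr
    have := (hZan r hr).aeval_polynomial Qhat
    simpa only [Polynomial.coe_aeval_eq_eval] using this
  have hBan : ∀ r ∈ Ioo a b, AnalyticAt ℝ B r := by
    intro r hr
    exact (analyticAt_id.pow 2).div (hQan r hr) (ne_of_gt (hQZpos r hr))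
  have hψan : ∀ r ∈ Ioo a b, AnalyticAt ℝ ψ r := by
    intro r hr
    exact (analyticAt_const.mul
      ((my_analyticAt_rpow_const (hBpos r hr)).comp (hBan r hr))).mul (hZan r hr)
  have hφψ : ∀ r ∈ Ioo a b, φ r = ψ r := by
    intro r hr
    rw [hφ r]
    have hq := hODE r hr
    have hr0 := hrpos r hr
    have hz' := hZ' r hr
    have hp := hPZ r hr
    have hbase : r / (-(deriv Z r) * Phat.eval (Z r)) = B r := by
      simp only [hB]
      have hq' : Qhat.eval (Z r) = r * (-(deriv Z r)) * Phat.eval (Z r) := by linarith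
      rw [hq']
      field_simp [hr0.ne', hz'.ne, hp.ne']
    rw [hbase, hψ]
  have hev : ∀ r ∈ Ioo a b, φ =ᶠ[𝓝 r] ψ := fun r hr =>
    Filter.eventuallyEq_of_mem (isOpen_Ioo.mem_nhds hr) hφψ
  have hφan : AnalyticOnNhd ℝ φ (Ioo a b) := fun r hr =>
    (hψan r hr).congr (hev r hr).symm
  have hψderiv : ∀ r ∈ Ioo a b, deriv ψ r =
      2 * ((2 * r * Qhat.eval (Z r) - r ^ 2 * ((derivative Qhat).eval (Z r) * deriv Z r))
        / (Qhat.eval (Z r)) ^ 2 * c * B r ^ (c - 1)) * Z r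
        + 2 * B r ^ c * deriv Z r := by
    intro r hr
    have hZd : HasDerivAt Z (deriv Z r) r := (hZan r hr).differentiableAt.hasDerivAt
    have hqd : HasDerivAt (fun x => Qhat.eval (Z x))
        ((derivative Qhat).eval (Z r) * deriv Z r) r :=
      (Qhat.hasDerivAt (Z r)).comp r hZd
    have hpow : HasDerivAt (fun x : ℝ => x ^ 2) (2 * r) r := by
      simpa using hasDerivAt_pow 2 r
    have hBd : HasDerivAt B
        ((2 * r * Qhat.eval (Z r) - r ^ 2 * ((derivative Qhat).eval (Z r) * deriv Z r))
          / (Qhat.eval (Z r)) ^ 2) r := by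
      simp only [hB]
      exact hpow.div hqd (ne_of_gt (hQZpos r hr))
    have hBrd : HasDerivAt (fun x => B x ^ c)
        ((2 * r * Qhat.eval (Z r) - r ^ 2 * ((derivative Qhat).eval (Z r) * deriv Z r))
          / (Qhat.eval (Z r)) ^ 2 * c * B r ^ (c - 1)) r :=
      hBd.rpow_const (Or.inl (ne_of_gt (hBpos r hr)))
    have := ((hBrd.const_mul 2).mul hZd).deriv
    simp only [hψ]
    exact this
  refine ⟨hφan, by rw [hφ 1, hZ1, mul_zero], ?_, ?_, ?_⟩
  · intro r hr
    rw [hφ r]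
    have h₁ := hrpos r hr.1
    have h₂ := hZ' r hr.1
    have h₃ := hPZ r hr.1
    have h₄ := hZpos r hr
    have hbase : 0 < r / (-(deriv Z r) * Phat.eval (Z r)) :=
      div_pos h₁ (mul_pos (neg_pos.2 h₂) h₃)
    exact mul_pos (mul_pos two_pos (Real.rpow_pos_of_pos hbase _)) h₄
  · intro r hr
    rw [hφψ r hr, (hev r hr).deriv_eq, hψderiv r hr]
    by_cases hre : r = 1
    · subst hre
      simp only [hψ]
      simp [hZ1]
    · have hz := hZne r hr hre
      have hq := hODE r hr
      have hqpos := hQZpos r hr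
      have hppos := hPZ r hr
      have hr0 := hrpos r hr
      have hZd' : deriv Z r = -(Qhat.eval (Z r) / (r * Phat.eval (Z r))) := by
        have hne : r * Phat.eval (Z r) ≠ 0 := by positivity
        field_simp
        linear_combination hq
      have hq' : (derivative Qhat).eval (Z r)
          = (((k+2 : ℕ) : ℝ) + 1) * (Qhat.eval (Z r) - Phat.eval (Z r)) / Z r := by
        rw [eq_div_iff hz]
        have := hqid (Z r) hz
        linarith
      have hBr : B r = r ^ 2 / Qhat.eval (Z r) := by simp only [hB]
      have hsub : B r ^ (c - 1) = B r ^ c / B r :=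
        Real.rpow_sub_one (ne_of_gt (hBpos r hr)) c
      simp only [hψ]
      rw [hsub, hZd', hq', hBr, hc]
      have hM : (((k+2 : ℕ) : ℝ) + 1) ≠ 0 := by positivity
      have hA : (0:ℝ) < (r ^ 2 / Qhat.eval (Z r)) ^ c :=
        Real.rpow_pos_of_pos (by positivity) c
      field_simp
      ring
  · rw [(hev 1 h1).deriv_eq, hψderiv 1 h1]
    have hZ'1 : deriv Z 1 = -1 := by
      have h0 := hODE 1 h1
      rw [hZ1, hP0, hQ0] at h0
      linarith
    have hB1 : B 1 = 1 := by
      simp only [hB]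
      simp [hZ1, hQ0]
    rw [hZ1, hB1, hZ'1]
    simp [Real.one_rpow]
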